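/- The tournament X_13, defined on ZMod 13 with an arc from i to j iff j - i ∈ {1, 2, 3, 5, 6, 9}, contains no transitive subtournament on 5 vertices. -/
import Mathlib


def IsTournament {V : Type*} (r : V → V → Prop) : Prop :=
  (∀ v, ¬ r v v) ∧ ∀ u v : V, u ≠ v → (r u v ↔ ¬ r v u)

def TransOn {V : Type*} (r : V → V → Prop) (S : Set V) : Prop :=
  ∀ a ∈ S, ∀ b ∈ S, ∀ c ∈ S, r a b → r b c → r a c

def Colorable {V : Type*} (r : V → V → Prop) (k : ℕ) : Prop :=
  ∃ f : V → Fin k, ∀ c : Fin k, TransOn r {v | f v = c}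

def x13 (i j : ZMod 13) : Prop :=
  j - i = 1 ∨ j - i = 2 ∨ j - i = 3 ∨ j - i = 5 ∨ j - i = 6 ∨ j - i = 9

instance x13.dec : ∀ i j : ZMod 13, Decidable (x13 i j) := fun i j => by
  unfold x13; infer_instance

def cyc (t : ZMod 13 × ZMod 13 × ZMod 13) : Prop :=
  (x13 t.1 t.2.1 ∧ x13 t.2.1 t.2.2 ∧ x13 t.2.2 t.1) ∨
  (x13 t.2.1 t.1 ∧ x13 t.2.2 t.2.1 ∧ x13 t.1 t.2.2)

instance cyc.dec : ∀ t, Decidable (cyc t) := fun t => by unfold cyc; infer_instance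

set_option maxHeartbeats 2000000 in
set_option maxRecDepth 10000 in
lemma key : ∀ b c d e : ZMod 13, b ≠ 0 → c ≠ 0 → d ≠ 0 → e ≠ 0 →
    b ≠ c → b ≠ d → b ≠ e → c ≠ d → c ≠ e → d ≠ e →
    ∃ t ∈ [((0:ZMod 13),b,c),(0,b,d),(0,b,e),(0,c,d),(0,c,e),(0,d,e),
           (b,c,d),(b,c,e),(b,d,e),(c,d,e)], cyc t := by
  set_option synthInstance.maxSize 1000 in decide

lemma x13_nosym : ∀ i j : ZMod 13, ¬ (x13 i j ∧ x13 j i) := by decide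

lemma x13_shift (t i j : ZMod 13) : x13 (i - t) (j - t) ↔ x13 i j := by
  have h : (j - t) - (i - t) = j - i := by ring
  unfold x13; rw [h]

set_option maxHeartbeats 1000000 in
theorem stmt10 : ¬ ∃ S : Finset (ZMod 13), S.card = 5 ∧ TransOn x13 ↑S := by
  rintro ⟨S, h5, ht⟩
  -- translate so that 0 ∈ T
  obtain ⟨a0, ha0⟩ := Finset.card_pos.mp (by omega : 0 < S.card)
  set T : Finset (ZMod 13) := S.image (fun x => x - a0) with hT
  have hTcard : T.card = 5 := by
    rw [hT, Finset.card_image_of_injective _ (sub_left_injective), h5]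
  have htT : ∀ a ∈ T, ∀ b ∈ T, ∀ c ∈ T, x13 a b → x13 b c → x13 a c := by
    intro a ha b hb c hc hab hbc
    rw [hT, Finset.mem_image] at ha hb hc
    obtain ⟨a', ha', rfl⟩ := ha
    obtain ⟨b', hb', rfl⟩ := hb
    obtain ⟨c', hc', rfl⟩ := hc
    rw [x13_shift] at hab hbc ⊢
    exact ht a' (by exact_mod_cast ha') b' (by exact_mod_cast hb') c' (by exact_mod_cast hc') hab hbc
  have h0T : (0 : ZMod 13) ∈ T := by
    rw [hT, Finset.mem_image]; exact ⟨a0, ha0, sub_self a0⟩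
  -- extract the four nonzero elements
  have h4 : (T.erase 0).card = 4 := by rw [Finset.card_erase_of_mem h0T, hTcard]
  obtain ⟨b, U1, hbU1, hU1, h3⟩ := Finset.card_eq_succ.mp h4
  obtain ⟨c, U2, hcU2, hU2, h2⟩ := Finset.card_eq_succ.mp h3
  obtain ⟨d, U3, hdU3, hU3, h1⟩ := Finset.card_eq_succ.mp h2
  obtain ⟨e, U4, heU4, hU4, h0⟩ := Finset.card_eq_succ.mp h1
  rw [Finset.card_eq_zero] at h0
  subst h0
  have hmemE : ∀ x, x ∈ T.erase 0 ↔ x = b ∨ x = c ∨ x = d ∨ x = e := by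
    intro x
    rw [← hU1, ← hU2, ← hU3, ← hU4]
    simp [Finset.mem_insert]
  have hb' : b ∈ T.erase 0 := (hmemE b).mpr (Or.inl rfl)
  have hc' : c ∈ T.erase 0 := (hmemE c).mpr (Or.inr (Or.inl rfl))
  have hd' : d ∈ T.erase 0 := (hmemE d).mpr (Or.inr (Or.inr (Or.inl rfl)))
  have he' : e ∈ T.erase 0 := (hmemE e).mpr (Or.inr (Or.inr (Or.inr rfl)))
  have hbT : b ∈ T := Finset.mem_of_mem_erase hb'
  have hcT : c ∈ T := Finset.mem_of_mem_erase hc'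
  have hdT : d ∈ T := Finset.mem_of_mem_erase hd'
  have heT : e ∈ T := Finset.mem_of_mem_erase he'
  have hb0 : b ≠ 0 := Finset.ne_of_mem_erase hb'
  have hc0 : c ≠ 0 := Finset.ne_of_mem_erase hc'
  have hd0 : d ≠ 0 := Finset.ne_of_mem_erase hd'
  have he0 : e ≠ 0 := Finset.ne_of_mem_erase he'
  have hbc : b ≠ c := by rintro rfl; rw [← hU2] at hbU1; exact hbU1 (Finset.mem_insert_self _ _)
  have hbd : b ≠ d := by
    rintro rfl
    rw [← hU2, ← hU3] at hbU1
    exact hbU1 (Finset.mem_insert_of_mem (Finset.mem_insert_self _ _))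
  have hbe : b ≠ e := by
    rintro rfl
    rw [← hU2, ← hU3, ← hU4] at hbU1
    exact hbU1 (Finset.mem_insert_of_mem (Finset.mem_insert_of_mem (Finset.mem_insert_self _ _)))
  have hcd : c ≠ d := by rintro rfl; rw [← hU3] at hcU2; exact hcU2 (Finset.mem_insert_self _ _)
  have hce : c ≠ e := by
    rintro rfl
    rw [← hU3, ← hU4] at hcU2
    exact hcU2 (Finset.mem_insert_of_mem (Finset.mem_insert_self _ _))
  have hde : d ≠ e := by rintro rfl; rw [← hU4] at hdU3; exact hdU3 (Finset.mem_insert_self _ _)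
  -- find a 3-cycle
  obtain ⟨t, htmem, htcyc⟩ := key b c d e hb0 hc0 hd0 he0 hbc hbd hbe hcd hce hde
  have hmemT : ∀ x, x = 0 ∨ x = b ∨ x = c ∨ x = d ∨ x = e → x ∈ T := by
    rintro x (rfl | rfl | rfl | rfl | rfl)
    exacts [h0T, hbT, hcT, hdT, heT]
  have hcontra : ∀ x y z : ZMod 13, x ∈ T → y ∈ T → z ∈ T → ¬ cyc (x, y, z) := by
    intro x y z hx hy hz hcy
    rcases hcy with ⟨h1, h2, h3⟩ | ⟨h1, h2, h3⟩
    · exact x13_nosym x z ⟨htT x hx y hy z hz h1 h2, h3⟩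
    · exact x13_nosym z x ⟨htT z hz y hy x hx h2 h1, h3⟩
  fin_cases htmem <;>
    exact hcontra _ _ _ (hmemT _ (by tauto)) (hmemT _ (by tauto)) (hmemT _ (by tauto)) htcyc
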